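/- Let P(m) be the natural unit interval order on [n] induced by m = (2, m_2, m_3, n, ..., n) with 2 incomparable to 3 and 3 incomparable to 4, and let G be its incomparability graph. Then there is an injection ψ from P(m)-tableaux of shape (3,2,1^{n-5}) to P(m)-tableaux of shape (2,2,2,1^{n-6}) such that inv_G(ψ(T)) = inv_G(T) + 1 for all T. -/
import Mathlib


/-- The order relation of the natural unit interval order `P(m)` on `{1, …, n}`:
`i <_P j` iff `m i < j`. -/
def ltP (m : ℕ → ℕ) (i j : ℕ) : Prop := m i < j

/-- `u` and `v` are incomparable in `P(m)` (an edge of the incomparability graph). -/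
def Incomp (m : ℕ → ℕ) (u v : ℕ) : Prop := u ≠ v ∧ ¬ ltP m u v ∧ ¬ ltP m v u

/-- `m` encodes a natural unit interval order `P(m)` on `{1, …, n}` induced by the sequence
`(2, m 2, m 3, n, …, n)`: `m 1 = 2`; `i ≤ m i ≤ n` for `1 ≤ i ≤ n`; `m` is nondecreasing on
`{1, …, n}`; and `m i = n` for `4 ≤ i ≤ n`. -/
def SeqHyp (n : ℕ) (m : ℕ → ℕ) : Prop :=
  m 1 = 2 ∧
  (∀ i, 1 ≤ i → i ≤ n → i ≤ m i ∧ m i ≤ n) ∧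
  (∀ i j, 1 ≤ i → i ≤ j → j ≤ n → m i ≤ m j) ∧
  (∀ i, 4 ≤ i → i ≤ n → m i = n)

/-- A `P(m)`-tableau of shape `sh` (a partition of `n`, given as a nonincreasing list of row
lengths): a filling of the cells `(i, j)` with `j < sh[i]` by the elements `1, …, n`, each
appearing exactly once, with rows strictly increasing in `<_P` and entries in consecutive rows
of a column pairwise non-decreasing (`¬ b <_P a` whenever `a` is immediately above `b`).
Cells outside the shape carry the junk value `0`. -/
structure PTab (n : ℕ) (m : ℕ → ℕ) (sh : List ℕ) where
  entry : ℕ → ℕ → ℕ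
  zero_outside : ∀ i j, sh.getD i 0 ≤ j → entry i j = 0
  mem_inside : ∀ i j, j < sh.getD i 0 → entry i j ∈ Finset.Icc 1 n
  inj : ∀ i j i' j', j < sh.getD i 0 → j' < sh.getD i' 0 →
    entry i j = entry i' j' → i = i' ∧ j = j'
  surj : ∀ v ∈ Finset.Icc 1 n, ∃ i j, j < sh.getD i 0 ∧ entry i j = v
  rows : ∀ i j j', j < j' → j' < sh.getD i 0 → ltP m (entry i j) (entry i j')
  cols : ∀ i j, j < sh.getD (i + 1) 0 → ¬ ltP m (entry (i + 1) j) (entry i j)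

/-- The number of `G`-inversions of a `P(m)`-tableau: pairs of cells carrying incomparable
values `u < v` with `u` in a strictly higher row than `v`. -/
noncomputable def invG {n : ℕ} {m : ℕ → ℕ} {sh : List ℕ} (T : PTab n m sh) : ℕ :=
  Nat.card {c : (ℕ × ℕ) × (ℕ × ℕ) //
    c.1.2 < sh.getD c.1.1 0 ∧ c.2.2 < sh.getD c.2.1 0 ∧
    c.1.1 < c.2.1 ∧
    T.entry c.1.1 c.1.2 < T.entry c.2.1 c.2.2 ∧
    Incomp m (T.entry c.1.1 c.1.2) (T.entry c.2.1 c.2.2)}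

namespace PJaux



open Finset

lemma PTab_ext {n : ℕ} {m : ℕ → ℕ} {sh : List ℕ} {T T' : PTab n m sh}
    (h : T.entry = T'.entry) : T = T' := by
  cases T; cases T'; cases h; rfl

lemma getD_rep (k i d a : ℕ) : (List.replicate k a).getD i d = if i < k then a else d := by
  induction k generalizing i with
  | zero => simp
  | succ k ih =>
    cases i with
    | zero => simp [List.replicate_succ]
    | succ i => rw [List.replicate_succ, List.getD_cons_succ, ih]; split_ifs <;> omega

abbrev shA (n : ℕ) : List ℕ := 3 :: 2 :: List.replicate (n - 5) 1
abbrev shB (n : ℕ) : List ℕ := 2 :: 2 :: 2 :: List.replicate (n - 6) 1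

lemma shA_getD (n : ℕ) (hn : 6 ≤ n) (i : ℕ) :
    (shA n).getD i 0 = if i = 0 then 3 else if i = 1 then 2 else if i < n - 3 then 1 else 0 := by
  match i with
  | 0 => rfl
  | 1 => rfl
  | (i+2) =>
    show (List.replicate (n-5) 1).getD i 0 = _
    rw [getD_rep, if_neg (by omega : ¬ (i+2 = 0)), if_neg (by omega : ¬ (i+2 = 1))]
    split_ifs <;> omega

lemma shB_getD (n : ℕ) (hn : 6 ≤ n) (i : ℕ) :
    (shB n).getD i 0 = if i < 3 then 2 else if i < n - 3 then 1 else 0 := by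
  match i with
  | 0 => rfl
  | 1 => rfl
  | 2 => rfl
  | (i+3) =>
    show (List.replicate (n-6) 1).getD i 0 = _
    rw [getD_rep, if_neg (by omega : ¬ (i+3 < 3))]
    split_ifs <;> omega

variable {n : ℕ} {m : ℕ → ℕ}

open Classical in
noncomputable def rowOf {sh : List ℕ} (T : PTab n m sh) (v : ℕ) : ℕ :=
  if h : ∃ p : ℕ × ℕ, p.2 < sh.getD p.1 0 ∧ T.entry p.1 p.2 = v then h.choose.1 else 0

lemma rowOf_entry {sh : List ℕ} (T : PTab n m sh) {i j : ℕ} (h : j < sh.getD i 0) :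
    rowOf T (T.entry i j) = i := by
  have hex : ∃ p : ℕ × ℕ, p.2 < sh.getD p.1 0 ∧ T.entry p.1 p.2 = T.entry i j := ⟨(i, j), h, rfl⟩
  rw [rowOf, dif_pos hex]
  obtain ⟨h1, h2⟩ := hex.choose_spec
  exact (T.inj _ _ _ _ h1 h h2).1

open Classical in
noncomputable def Jset {sh : List ℕ} (T : PTab n m sh) : Finset (ℕ × ℕ) :=
  (Finset.Icc 1 n ×ˢ Finset.Icc 1 n).filter fun p =>
    p.1 < p.2 ∧ Incomp m p.1 p.2 ∧ rowOf T p.1 < rowOf T p.2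

lemma mem_Jset {sh : List ℕ} (T : PTab n m sh) (u v : ℕ) :
    (u, v) ∈ Jset T ↔
      (1 ≤ u ∧ u ≤ n) ∧ (1 ≤ v ∧ v ≤ n) ∧ u < v ∧ Incomp m u v ∧
        rowOf T u < rowOf T v := by
  simp only [Jset, Finset.mem_filter, Finset.mem_product, Finset.mem_Icc]
  tauto

lemma invG_eq_Jcard {sh : List ℕ} (T : PTab n m sh) : invG T = (Jset T).card := by
  rw [← Nat.card_eq_finsetCard]
  apply Nat.card_congr
  refine Equiv.ofBijective
    (fun c => ⟨(T.entry c.1.1.1 c.1.1.2, T.entry c.1.2.1 c.1.2.2), ?_⟩) ⟨?_, ?_⟩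
  · obtain ⟨c, h1, h2, h3, h4, h5⟩ := c
    rw [mem_Jset]
    have b1 := T.mem_inside _ _ h1
    have b2 := T.mem_inside _ _ h2
    rw [Finset.mem_Icc] at b1 b2
    exact ⟨b1, b2, h4, h5, by rw [rowOf_entry T h1, rowOf_entry T h2]; exact h3⟩
  · rintro ⟨⟨⟨i, j⟩, ⟨i', j'⟩⟩, h1, h2, h3, h4, h5⟩ ⟨⟨⟨a, b⟩, ⟨a', b'⟩⟩, g1, g2, g3, g4, g5⟩ hf
    simp only [Subtype.mk.injEq, Prod.mk.injEq] at hf ⊢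
    obtain ⟨hu, hv⟩ := hf
    obtain ⟨e1, e2⟩ := T.inj _ _ _ _ h1 g1 hu
    obtain ⟨e3, e4⟩ := T.inj _ _ _ _ h2 g2 hv
    exact ⟨⟨e1, e2⟩, ⟨e3, e4⟩⟩
  · rintro ⟨⟨u, v⟩, hp⟩
    rw [mem_Jset] at hp
    obtain ⟨hu, hv, huv, hinc, hrow⟩ := hp
    obtain ⟨i, j, hj, hij⟩ := T.surj u (Finset.mem_Icc.mpr hu)
    obtain ⟨i', j', hj', hij'⟩ := T.surj v (Finset.mem_Icc.mpr hv)
    have r1 : rowOf T u = i := by rw [← hij]; exact rowOf_entry T hj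
    have r2 : rowOf T v = i' := by rw [← hij']; exact rowOf_entry T hj'
    refine ⟨⟨((i, j), (i', j')), hj, hj', ?_, ?_, ?_⟩, ?_⟩
    · rw [← r1, ← r2]; exact hrow
    · rw [hij, hij']; exact huv
    · rw [hij, hij']; exact hinc
    · simp only [Subtype.mk.injEq, Prod.mk.injEq]
      exact ⟨hij, hij'⟩


variable {n : ℕ} {m : ℕ → ℕ}

def Wv (T : PTab n m (shA n)) : ℕ := T.entry 0 2
def Ev (T : PTab n m (shA n)) : ℕ := T.entry 1 1
def Fv (T : PTab n m (shA n)) : ℕ := T.entry 2 0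

lemma specsA (hn : 6 ≤ n) (hm : SeqHyp n m) (h23 : 3 ≤ m 2) (h34 : 4 ≤ m 3)
    (T : PTab n m (shA n)) :
    T.entry 0 0 = 1 ∧ T.entry 0 1 = 3 ∧ T.entry 1 0 = 2 ∧
    m 3 < Wv T ∧ Wv T ≤ n ∧ m 2 < Ev T ∧ Ev T ≤ n ∧ 4 ≤ Fv T ∧ Fv T ≤ n ∧
    Wv T ≠ Ev T ∧ Wv T ≠ Fv T ∧ Ev T ≠ Fv T := by
  have g0 : (shA n).getD 0 0 = 3 := rfl
  have g1 : (shA n).getD 1 0 = 2 := rfl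
  have g2 : (shA n).getD 2 0 = 1 := by
    rw [shA_getD n hn, if_neg (show ¬(2=0) by omega), if_neg (show ¬(2=1) by omega),
      if_pos (show 2 < n - 3 by omega)]
  have r01 : ltP m (T.entry 0 0) (T.entry 0 1) := T.rows 0 0 1 (by omega) (by rw [g0]; omega)
  have r12 : ltP m (T.entry 0 1) (T.entry 0 2) := T.rows 0 1 2 (by omega) (by rw [g0]; omega)
  have r10 : ltP m (T.entry 1 0) (T.entry 1 1) := T.rows 1 0 1 (by omega) (by rw [g1]; omega)
  have b00 := Finset.mem_Icc.mp (T.mem_inside 0 0 (by rw [g0]; omega))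
  have b01 := Finset.mem_Icc.mp (T.mem_inside 0 1 (by rw [g0]; omega))
  have b02 := Finset.mem_Icc.mp (T.mem_inside 0 2 (by rw [g0]; omega))
  have b10 := Finset.mem_Icc.mp (T.mem_inside 1 0 (by rw [g1]; omega))
  have b11 := Finset.mem_Icc.mp (T.mem_inside 1 1 (by rw [g1]; omega))
  have b20 := Finset.mem_Icc.mp (T.mem_inside 2 0 (by rw [g2]; omega))
  unfold ltP at r01 r12 r10
  -- T.entry 0 1 ≤ 3
  have h01le3 : T.entry 0 1 ≤ 3 := by
    by_contra h
    have := hm.2.2.2 (T.entry 0 1) (by omega) b01.2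
    omega
  -- T.entry 0 0 = 1
  have h00 : T.entry 0 0 = 1 := by
    by_contra h
    have h2 : 2 ≤ T.entry 0 0 := by omega
    have := hm.2.2.1 2 (T.entry 0 0) (by omega) h2 b00.2
    omega
  have h01 : T.entry 0 1 = 3 := by
    have hm1 := hm.1
    rw [h00, hm1] at r01
    omega
  have h10le3 : T.entry 1 0 ≤ 3 := by
    by_contra h
    have := hm.2.2.2 (T.entry 1 0) (by omega) b10.2
    omega
  have hne1 : T.entry 1 0 ≠ 1 := by
    intro h
    have := (T.inj 1 0 0 0 (by rw [g1]; omega) (by rw [g0]; omega) (by rw [h, h00])).1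
    omega
  have hne3 : T.entry 1 0 ≠ 3 := by
    intro h
    have := (T.inj 1 0 0 1 (by rw [g1]; omega) (by rw [g0]; omega) (by rw [h, h01])).1
    omega
  have h10 : T.entry 1 0 = 2 := by omega
  have hW : m 3 < Wv T := by rw [← h01]; exact r12
  have hE : m 2 < Ev T := by rw [← h10]; exact r10
  have hF1 : 4 ≤ Fv T := by
    have hne1' : Fv T ≠ 1 := by
      intro h
      have := (T.inj 2 0 0 0 (by rw [g2]; omega) (by rw [g0]; omega) (by rw [show T.entry 2 0 = Fv T from rfl, h, h00])).1
      omega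
    have hne2' : Fv T ≠ 2 := by
      intro h
      have := (T.inj 2 0 1 0 (by rw [g2]; omega) (by rw [g1]; omega) (by rw [show T.entry 2 0 = Fv T from rfl, h, h10])).1
      omega
    have hne3' : Fv T ≠ 3 := by
      intro h
      have := (T.inj 2 0 0 1 (by rw [g2]; omega) (by rw [g0]; omega) (by rw [show T.entry 2 0 = Fv T from rfl, h, h01])).1
      omega
    have : 1 ≤ Fv T := b20.1
    omega
  have hWE : Wv T ≠ Ev T := by
    intro h
    have := (T.inj 0 2 1 1 (by rw [g0]; omega) (by rw [g1]; omega) h).1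
    omega
  have hWF : Wv T ≠ Fv T := by
    intro h
    have := (T.inj 0 2 2 0 (by rw [g0]; omega) (by rw [g2]; omega) h).1
    omega
  have hEF : Ev T ≠ Fv T := by
    intro h
    have := (T.inj 1 1 2 0 (by rw [g1]; omega) (by rw [g2]; omega) h).1
    omega
  exact ⟨h00, h01, h10, hW, b02.2, hE, b11.2, hF1, b20.2, hWE, hWF, hEF⟩

lemma offA (hn : 6 ≤ n) (hm : SeqHyp n m) (h23 : 3 ≤ m 2) (h34 : 4 ≤ m 3)
    (T : PTab n m (shA n)) (v : ℕ) (hv1 : 1 ≤ v) (hv2 : v ≤ n)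
    (h1 : v ≠ 1) (h2 : v ≠ 2) (h3 : v ≠ 3)
    (hw : v ≠ Wv T) (he : v ≠ Ev T) (hf : v ≠ Fv T) :
    ∃ i, 3 ≤ i ∧ i < n - 3 ∧ T.entry i 0 = v := by
  obtain ⟨e00, e01, e10, _⟩ := specsA hn hm h23 h34 T
  obtain ⟨i, j, hj, hij⟩ := T.surj v (Finset.mem_Icc.mpr ⟨hv1, hv2⟩)
  rw [shA_getD n hn] at hj
  split_ifs at hj with hi0 hi1 hilt
  · -- i = 0, j < 3
    subst hi0
    interval_cases j
    · rw [e00] at hij; omega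
    · rw [e01] at hij; omega
    · exact absurd hij.symm hw
  · -- i = 1, j < 2
    subst hi1
    interval_cases j
    · rw [e10] at hij; omega
    · exact absurd hij.symm he
  · -- 2 ≤ i < n - 3, j = 0
    have hj0 : j = 0 := by omega
    subst hj0
    rcases Nat.lt_or_ge i 3 with hi | hi
    · have : i = 2 := by omega
      subst this
      exact absurd hij.symm hf
    · exact ⟨i, hi, hilt, hij⟩
  · omega

def trip (m : ℕ → ℕ) (T : PTab n m (shA n)) : ℕ × ℕ × ℕ :=
  if m 3 < Fv T then
    (if m 3 < Ev T then (Wv T, Ev T, Fv T) else (Ev T, Wv T, Fv T))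
  else if m 3 < Ev T then
    (if m 2 < Fv T then (Wv T, Fv T, Ev T) else (Fv T, Wv T, Ev T))
  else
    (if m 2 < Fv T then (Ev T, Fv T, Wv T) else (Fv T, Ev T, Wv T))

lemma trip_spec (T : PTab n m (shA n)) :
    (m 3 < Fv T ∧ m 3 < Ev T ∧ trip m T = (Wv T, Ev T, Fv T)) ∨
    (m 3 < Fv T ∧ Ev T ≤ m 3 ∧ trip m T = (Ev T, Wv T, Fv T)) ∨
    (Fv T ≤ m 3 ∧ m 3 < Ev T ∧ m 2 < Fv T ∧ trip m T = (Wv T, Fv T, Ev T)) ∨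
    (Fv T ≤ m 3 ∧ m 3 < Ev T ∧ Fv T ≤ m 2 ∧ trip m T = (Fv T, Wv T, Ev T)) ∨
    (Fv T ≤ m 3 ∧ Ev T ≤ m 3 ∧ m 2 < Fv T ∧ trip m T = (Ev T, Fv T, Wv T)) ∨
    (Fv T ≤ m 3 ∧ Ev T ≤ m 3 ∧ Fv T ≤ m 2 ∧ trip m T = (Fv T, Ev T, Wv T)) := by
  unfold trip
  split_ifs with h1 h2 h3 h4 h5 <;> [skip; skip; skip; skip; skip; skip] <;>
    first
      | exact Or.inl ⟨h1, h2, rfl⟩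
      | exact Or.inr (Or.inl ⟨h1, by omega, rfl⟩)
      | exact Or.inr (Or.inr (Or.inl ⟨by omega, h3, h4, rfl⟩))
      | exact Or.inr (Or.inr (Or.inr (Or.inl ⟨by omega, h3, by omega, rfl⟩)))
      | exact Or.inr (Or.inr (Or.inr (Or.inr (Or.inl ⟨by omega, by omega, h5, rfl⟩))))
      | exact Or.inr (Or.inr (Or.inr (Or.inr (Or.inr ⟨by omega, by omega, by omega, rfl⟩))))

lemma trip_bounds (hn : 6 ≤ n) (hm : SeqHyp n m) (h23 : 3 ≤ m 2) (h34 : 4 ≤ m 3)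
    (T : PTab n m (shA n)) :
    4 ≤ (trip m T).1 ∧ (trip m T).1 ≤ n ∧
    m 2 < (trip m T).2.1 ∧ 4 ≤ (trip m T).2.1 ∧ (trip m T).2.1 ≤ n ∧
    m 3 < (trip m T).2.2 ∧ 4 ≤ (trip m T).2.2 ∧ (trip m T).2.2 ≤ n ∧
    (trip m T).1 ≠ (trip m T).2.1 ∧ (trip m T).1 ≠ (trip m T).2.2 ∧
    (trip m T).2.1 ≠ (trip m T).2.2 := by
  obtain ⟨-, -, -, hW, hWn, hE, hEn, hF, hFn, hWE, hWF, hEF⟩ := specsA hn hm h23 h34 T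
  have hm23 : m 2 ≤ m 3 := hm.2.2.1 2 3 (by omega) (by omega) (by omega)
  rcases trip_spec T with ⟨c1, c2, ht⟩ | ⟨c1, c2, ht⟩ | ⟨c1, c2, c3, ht⟩ |
    ⟨c1, c2, c3, ht⟩ | ⟨c1, c2, c3, ht⟩ | ⟨c1, c2, c3, ht⟩ <;>
    rw [ht] <;> refine ⟨?_, ?_, ?_, ?_, ?_, ?_, ?_, ?_, ?_, ?_, ?_⟩ <;> simp <;> omega

lemma trip_mem (T : PTab n m (shA n)) :
    (Wv T = (trip m T).1 ∨ Wv T = (trip m T).2.1 ∨ Wv T = (trip m T).2.2) ∧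
    (Ev T = (trip m T).1 ∨ Ev T = (trip m T).2.1 ∨ Ev T = (trip m T).2.2) ∧
    (Fv T = (trip m T).1 ∨ Fv T = (trip m T).2.1 ∨ Fv T = (trip m T).2.2) := by
  rcases trip_spec T with ⟨-, -, ht⟩ | ⟨-, -, ht⟩ | ⟨-, -, -, ht⟩ | ⟨-, -, -, ht⟩ |
    ⟨-, -, -, ht⟩ | ⟨-, -, -, ht⟩ <;> rw [ht] <;> simp <;> tauto

lemma trip_mem' (T : PTab n m (shA n)) :
    ((trip m T).1 = Wv T ∨ (trip m T).1 = Ev T ∨ (trip m T).1 = Fv T) ∧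
    ((trip m T).2.1 = Wv T ∨ (trip m T).2.1 = Ev T ∨ (trip m T).2.1 = Fv T) ∧
    ((trip m T).2.2 = Wv T ∨ (trip m T).2.2 = Ev T ∨ (trip m T).2.2 = Fv T) := by
  rcases trip_spec T with ⟨-, -, ht⟩ | ⟨-, -, ht⟩ | ⟨-, -, -, ht⟩ | ⟨-, -, -, ht⟩ |
    ⟨-, -, -, ht⟩ | ⟨-, -, -, ht⟩ <;> rw [ht] <;> simp <;> tauto

lemma gA0 : (shA n).getD 0 0 = 3 := rfl
lemma gA1 : (shA n).getD 1 0 = 2 := rfl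
lemma gAbig (hn : 6 ≤ n) (i : ℕ) (h2 : 2 ≤ i) (hlt : i < n - 3) : (shA n).getD i 0 = 1 := by
  rw [shA_getD n hn, if_neg (by omega), if_neg (by omega), if_pos hlt]
lemma gB0 : (shB n).getD 0 0 = 2 := rfl
lemma gB1 : (shB n).getD 1 0 = 2 := rfl
lemma gB2 : (shB n).getD 2 0 = 2 := rfl
lemma gBbig (hn : 6 ≤ n) (i : ℕ) (h3 : 3 ≤ i) (hlt : i < n - 3) : (shB n).getD i 0 = 1 := by
  rw [shB_getD n hn, if_neg (by omega), if_pos hlt]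

lemma bigA_props (hn : 6 ≤ n) (hm : SeqHyp n m) (h23 : 3 ≤ m 2) (h34 : 4 ≤ m 3)
    (T : PTab n m (shA n)) (i : ℕ) (h3 : 3 ≤ i) (hlt : i < n - 3) :
    4 ≤ T.entry i 0 ∧ T.entry i 0 ≤ n ∧ m (T.entry i 0) = n ∧
    T.entry i 0 ≠ Wv T ∧ T.entry i 0 ≠ Ev T ∧ T.entry i 0 ≠ Fv T := by
  obtain ⟨e00, e01, e10, -⟩ := specsA hn hm h23 h34 T
  have gA : (shA n).getD i 0 = 1 := gAbig hn i (by omega) hlt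
  have hb := Finset.mem_Icc.mp (T.mem_inside i 0 (by rw [gA]; omega))
  have hne1 : T.entry i 0 ≠ 1 := by
    intro h
    have := (T.inj i 0 0 0 (by rw [gA]; omega) (by rw [gA0]; omega) (by rw [h, e00])).1
    omega
  have hne2 : T.entry i 0 ≠ 2 := by
    intro h
    have := (T.inj i 0 1 0 (by rw [gA]; omega) (by rw [gA1]; omega) (by rw [h, e10])).1
    omega
  have hne3 : T.entry i 0 ≠ 3 := by
    intro h
    have := (T.inj i 0 0 1 (by rw [gA]; omega) (by rw [gA0]; omega) (by rw [h, e01])).1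
    omega
  have hneW : T.entry i 0 ≠ Wv T := by
    intro h
    have := (T.inj i 0 0 2 (by rw [gA]; omega) (by rw [gA0]; omega) h).1
    omega
  have hneE : T.entry i 0 ≠ Ev T := by
    intro h
    have := (T.inj i 0 1 1 (by rw [gA]; omega) (by rw [gA1]; omega) h).1
    omega
  have hneF : T.entry i 0 ≠ Fv T := by
    intro h
    have := (T.inj i 0 2 0 (by rw [gA]; omega) (by rw [gAbig hn 2 (by omega) (by omega)]; omega) h).1
    omega
  have h4 : 4 ≤ T.entry i 0 := by omega
  exact ⟨h4, hb.2, hm.2.2.2 _ h4 hb.2, hneW, hneE, hneF⟩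

def psiEntry (n : ℕ) (m : ℕ → ℕ) (T : PTab n m (shA n)) : ℕ → ℕ → ℕ := fun i j =>
  if i = 0 ∧ j = 0 then 1
  else if i = 1 ∧ j = 0 then 2
  else if i = 2 ∧ j = 0 then 3
  else if i = 0 ∧ j = 1 then (trip m T).1
  else if i = 1 ∧ j = 1 then (trip m T).2.1
  else if i = 2 ∧ j = 1 then (trip m T).2.2
  else if 3 ≤ i ∧ i < n - 3 ∧ j = 0 then T.entry i 0
  else 0

variable (T : PTab n m (shA n))

lemma psiE00 : psiEntry n m T 0 0 = 1 := by norm_num [psiEntry]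
lemma psiE10 : psiEntry n m T 1 0 = 2 := by norm_num [psiEntry]
lemma psiE20 : psiEntry n m T 2 0 = 3 := by norm_num [psiEntry]
lemma psiE01 : psiEntry n m T 0 1 = (trip m T).1 := by norm_num [psiEntry]
lemma psiE11 : psiEntry n m T 1 1 = (trip m T).2.1 := by norm_num [psiEntry]
lemma psiE21 : psiEntry n m T 2 1 = (trip m T).2.2 := by norm_num [psiEntry]
lemma psi_big {i : ℕ} (h3 : 3 ≤ i) (hlt : i < n - 3) : psiEntry n m T i 0 = T.entry i 0 := by
  unfold psiEntry
  rw [if_neg (by omega), if_neg (by omega), if_neg (by omega), if_neg (by omega),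
    if_neg (by omega), if_neg (by omega), if_pos ⟨h3, hlt, rfl⟩]

def psiT (hn : 6 ≤ n) (hm : SeqHyp n m) (h23 : 3 ≤ m 2) (h34 : 4 ≤ m 3)
    (T : PTab n m (shA n)) : PTab n m (shB n) where
  entry := psiEntry n m T
  zero_outside := by
    intro i j h
    rw [shB_getD n hn] at h
    unfold psiEntry
    split_ifs at h with h1 h2 <;>
      split_ifs <;> first | rfl | (exfalso; omega)
  mem_inside := by
    intro i j h
    obtain ⟨x1b, x1n, x2m, x2b, x2n, x3m, x3b, x3n, d12, d13, d23⟩ := trip_bounds hn hm h23 h34 T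
    rw [shB_getD n hn] at h
    rw [Finset.mem_Icc]
    split_ifs at h with hi3 hin
    · interval_cases i <;> interval_cases j <;>
        simp only [psiE00, psiE10, psiE20, psiE01, psiE11, psiE21] <;> omega
    · have hj : j = 0 := by omega
      subst hj
      rw [psi_big T (by omega) hin]
      have := bigA_props hn hm h23 h34 T i (by omega) hin
      omega
    · omega
  inj := by
    intro i j i' j' hj hj' heq
    obtain ⟨x1b, x1n, x2m, x2b, x2n, x3m, x3b, x3n, d12, d13, d23⟩ := trip_bounds hn hm h23 h34 T
    obtain ⟨hWm, hEm, hFm⟩ := trip_mem T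
    rw [shB_getD n hn] at hj hj'
    split_ifs at hj with hi3 hin <;> split_ifs at hj' with hi3' hin'
    · -- both small
      interval_cases i <;> interval_cases j <;> interval_cases i' <;> interval_cases j' <;>
        simp only [psiE00, psiE10, psiE20, psiE01, psiE11, psiE21] at heq <;>
        first | (exact ⟨rfl, rfl⟩) | omega
    · -- small, big
      exfalso
      have hj'0 : j' = 0 := by omega
      subst hj'0
      rw [psi_big T (by omega) hin'] at heq
      obtain ⟨b4, bn, bm, bW, bE, bF⟩ := bigA_props hn hm h23 h34 T i' (by omega) hin'
      have bt1 : T.entry i' 0 ≠ (trip m T).1 := by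
        rcases (trip_mem' T).1 with h | h | h <;> rw [h] <;> assumption
      have bt2 : T.entry i' 0 ≠ (trip m T).2.1 := by
        rcases (trip_mem' T).2.1 with h | h | h <;> rw [h] <;> assumption
      have bt3 : T.entry i' 0 ≠ (trip m T).2.2 := by
        rcases (trip_mem' T).2.2 with h | h | h <;> rw [h] <;> assumption
      interval_cases i <;> interval_cases j <;>
        simp only [psiE00, psiE10, psiE20, psiE01, psiE11, psiE21] at heq <;> omega
    · omega
    · -- big, small
      exfalso
      have hj0 : j = 0 := by omega
      subst hj0
      rw [psi_big T (by omega) hin] at heq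
      obtain ⟨b4, bn, bm, bW, bE, bF⟩ := bigA_props hn hm h23 h34 T i (by omega) hin
      have bt1 : T.entry i 0 ≠ (trip m T).1 := by
        rcases (trip_mem' T).1 with h | h | h <;> rw [h] <;> assumption
      have bt2 : T.entry i 0 ≠ (trip m T).2.1 := by
        rcases (trip_mem' T).2.1 with h | h | h <;> rw [h] <;> assumption
      have bt3 : T.entry i 0 ≠ (trip m T).2.2 := by
        rcases (trip_mem' T).2.2 with h | h | h <;> rw [h] <;> assumption
      interval_cases i' <;> interval_cases j' <;>
        simp only [psiE00, psiE10, psiE20, psiE01, psiE11, psiE21] at heq <;> omega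
    · -- both big
      have hj0 : j = 0 := by omega
      have hj'0 : j' = 0 := by omega
      subst hj0; subst hj'0
      rw [psi_big T (by omega) hin, psi_big T (by omega) hin'] at heq
      refine ⟨(T.inj i 0 i' 0 ?_ ?_ heq).1, rfl⟩
      · rw [gAbig hn i (by omega) hin]; omega
      · rw [gAbig hn i' (by omega) hin']; omega
    · omega
    · omega
    · omega
    · omega
  surj := by
    intro v hv
    obtain ⟨hWm, hEm, hFm⟩ := trip_mem T
    rw [Finset.mem_Icc] at hv
    by_cases h1 : v = 1
    · exact ⟨0, 0, by rw [gB0]; omega, by rw [psiE00, h1]⟩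
    by_cases h2 : v = 2
    · exact ⟨1, 0, by rw [gB1]; omega, by rw [psiE10, h2]⟩
    by_cases h3 : v = 3
    · exact ⟨2, 0, by rw [gB2]; omega, by rw [psiE20, h3]⟩
    by_cases hW : v = Wv T
    · subst hW
      rcases hWm with h | h | h
      · exact ⟨0, 1, by rw [gB0]; omega, by rw [psiE01, h]⟩
      · exact ⟨1, 1, by rw [gB1]; omega, by rw [psiE11, h]⟩
      · exact ⟨2, 1, by rw [gB2]; omega, by rw [psiE21, h]⟩
    by_cases hE : v = Ev T
    · subst hE
      rcases hEm with h | h | h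
      · exact ⟨0, 1, by rw [gB0]; omega, by rw [psiE01, h]⟩
      · exact ⟨1, 1, by rw [gB1]; omega, by rw [psiE11, h]⟩
      · exact ⟨2, 1, by rw [gB2]; omega, by rw [psiE21, h]⟩
    by_cases hF : v = Fv T
    · subst hF
      rcases hFm with h | h | h
      · exact ⟨0, 1, by rw [gB0]; omega, by rw [psiE01, h]⟩
      · exact ⟨1, 1, by rw [gB1]; omega, by rw [psiE11, h]⟩
      · exact ⟨2, 1, by rw [gB2]; omega, by rw [psiE21, h]⟩
    obtain ⟨i, hi3, hilt, hi⟩ := offA hn hm h23 h34 T v hv.1 hv.2 h1 h2 h3 hW hE hF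
    exact ⟨i, 0, by rw [gBbig hn i hi3 hilt]; omega, by rw [psi_big T hi3 hilt, hi]⟩
  rows := by
    intro i j j' hjj hj'
    rw [shB_getD n hn] at hj'
    obtain ⟨x1b, x1n, x2m, x2b, x2n, x3m, x3b, x3n, d12, d13, d23⟩ := trip_bounds hn hm h23 h34 T
    have hm1 := hm.1
    split_ifs at hj' with hi3 hin
    · have hj0 : j = 0 := by omega
      have hj1 : j' = 1 := by omega
      subst hj0; subst hj1
      interval_cases i <;>
        simp only [psiE00, psiE01, psiE10, psiE11, psiE20, psiE21] <;> unfold ltP <;> omega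
    · omega
    · omega
  cols := by
    intro i j hj
    rw [shB_getD n hn] at hj
    obtain ⟨x1b, x1n, x2m, x2b, x2n, x3m, x3b, x3n, d12, d13, d23⟩ := trip_bounds hn hm h23 h34 T
    have mt1 : m (trip m T).2.1 = n := hm.2.2.2 _ x2b x2n
    have mt2 : m (trip m T).2.2 = n := hm.2.2.2 _ x3b x3n
    split_ifs at hj with hi3 hin
    · -- i + 1 < 3
      have hile : i ≤ 1 := by omega
      interval_cases i <;> interval_cases j <;>
        simp only [show (0:ℕ)+1 = 1 from rfl, show (1:ℕ)+1 = 2 from rfl,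
          psiE00, psiE01, psiE10, psiE11, psiE20, psiE21] <;> unfold ltP <;> omega
    · have hj0 : j = 0 := by omega
      subst hj0
      by_cases hi2 : i = 2
      · subst hi2
        rw [show (2:ℕ)+1 = 3 from rfl, psi_big T (by omega) (by omega), psiE20]
        obtain ⟨b4, bn, bm, -⟩ := bigA_props hn hm h23 h34 T 3 (by omega) (by omega)
        unfold ltP
        omega
      · have h3i : 3 ≤ i := by omega
        rw [psi_big T (by omega) hin, psi_big T h3i (by omega)]
        exact T.cols i 0 (by rw [gAbig hn (i+1) (by omega) hin]; omega)
    · omega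


lemma rowT_vals (hn : 6 ≤ n) (hm : SeqHyp n m) (h23 : 3 ≤ m 2) (h34 : 4 ≤ m 3)
    (T : PTab n m (shA n)) :
    rowOf T 1 = 0 ∧ rowOf T 2 = 1 ∧ rowOf T 3 = 0 ∧
    rowOf T (Wv T) = 0 ∧ rowOf T (Ev T) = 1 ∧ rowOf T (Fv T) = 2 := by
  obtain ⟨e00, e01, e10, -⟩ := specsA hn hm h23 h34 T
  refine ⟨?_, ?_, ?_, ?_, ?_, ?_⟩
  · have h := rowOf_entry T (i := 0) (j := 0) (by rw [gA0]; omega); rwa [e00] at h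
  · have h := rowOf_entry T (i := 1) (j := 0) (by rw [gA1]; omega); rwa [e10] at h
  · have h := rowOf_entry T (i := 0) (j := 1) (by rw [gA0]; omega); rwa [e01] at h
  · exact rowOf_entry T (i := 0) (j := 2) (by rw [gA0]; omega)
  · exact rowOf_entry T (i := 1) (j := 1) (by rw [gA1]; omega)
  · exact rowOf_entry T (i := 2) (j := 0) (by rw [gAbig hn 2 (by omega) (by omega)]; omega)

lemma rowPsi_vals (hn : 6 ≤ n) (hm : SeqHyp n m) (h23 : 3 ≤ m 2) (h34 : 4 ≤ m 3)
    (T : PTab n m (shA n)) :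
    rowOf (psiT hn hm h23 h34 T) 1 = 0 ∧ rowOf (psiT hn hm h23 h34 T) 2 = 1 ∧
    rowOf (psiT hn hm h23 h34 T) 3 = 2 ∧
    rowOf (psiT hn hm h23 h34 T) (trip m T).1 = 0 ∧
    rowOf (psiT hn hm h23 h34 T) (trip m T).2.1 = 1 ∧
    rowOf (psiT hn hm h23 h34 T) (trip m T).2.2 = 2 := by
  have hent : (psiT hn hm h23 h34 T).entry = psiEntry n m T := rfl
  refine ⟨?_, ?_, ?_, ?_, ?_, ?_⟩
  · have h := rowOf_entry (psiT hn hm h23 h34 T) (i := 0) (j := 0) (by rw [gB0]; omega)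
    rwa [hent, psiE00] at h
  · have h := rowOf_entry (psiT hn hm h23 h34 T) (i := 1) (j := 0) (by rw [gB1]; omega)
    rwa [hent, psiE10] at h
  · have h := rowOf_entry (psiT hn hm h23 h34 T) (i := 2) (j := 0) (by rw [gB2]; omega)
    rwa [hent, psiE20] at h
  · have h := rowOf_entry (psiT hn hm h23 h34 T) (i := 0) (j := 1) (by rw [gB0]; omega)
    rwa [hent, psiE01] at h
  · have h := rowOf_entry (psiT hn hm h23 h34 T) (i := 1) (j := 1) (by rw [gB1]; omega)
    rwa [hent, psiE11] at h
  · have h := rowOf_entry (psiT hn hm h23 h34 T) (i := 2) (j := 1) (by rw [gB2]; omega)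
    rwa [hent, psiE21] at h

lemma row_off (hn : 6 ≤ n) (hm : SeqHyp n m) (h23 : 3 ≤ m 2) (h34 : 4 ≤ m 3)
    (T : PTab n m (shA n)) (v : ℕ) (hv1 : 1 ≤ v) (hv2 : v ≤ n)
    (h1 : v ≠ 1) (h2 : v ≠ 2) (h3 : v ≠ 3)
    (hw : v ≠ Wv T) (he : v ≠ Ev T) (hf : v ≠ Fv T) :
    3 ≤ rowOf T v ∧ rowOf (psiT hn hm h23 h34 T) v = rowOf T v := by
  obtain ⟨i, hi3, hilt, hv⟩ := offA hn hm h23 h34 T v hv1 hv2 h1 h2 h3 hw he hf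
  have r1 : rowOf T v = i := by
    rw [← hv]; exact rowOf_entry T (by rw [gAbig hn i (by omega) hilt]; omega)
  have hpe : (psiT hn hm h23 h34 T).entry i 0 = v := by
    show psiEntry n m T i 0 = v
    rw [psi_big T hi3 hilt, hv]
  have r2 : rowOf (psiT hn hm h23 h34 T) v = i := by
    rw [← hpe]; exact rowOf_entry _ (by rw [gBbig hn i hi3 hilt]; omega)
  exact ⟨by omega, by rw [r2, r1]⟩

lemma psiT_entry (hn : 6 ≤ n) (hm : SeqHyp n m) (h23 : 3 ≤ m 2) (h34 : 4 ≤ m 3)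
    (T : PTab n m (shA n)) : (psiT hn hm h23 h34 T).entry = psiEntry n m T := rfl

lemma Wv_def (T : PTab n m (shA n)) : Wv T = T.entry 0 2 := rfl
lemma Ev_def (T : PTab n m (shA n)) : Ev T = T.entry 1 1 := rfl
lemma Fv_def (T : PTab n m (shA n)) : Fv T = T.entry 2 0 := rfl

attribute [irreducible] psiT psiEntry rowOf Jset Wv Ev Fv trip

def Lf' (W E F : ℕ) : Finset (ℕ × ℕ) :=
  {(1,2), (2,3), (2,F), (3,E), (3,F), (W,E), (E,W), (W,F), (F,W), (E,F), (F,E)}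

section Jmem

variable {sh : List ℕ}

lemma J12 (hn : 6 ≤ n) (hm : SeqHyp n m) (h23 : 3 ≤ m 2) (X : PTab n m sh) :
    ((1, 2) ∈ Jset X) ↔ rowOf X 1 < rowOf X 2 := by
  have hm1 := hm.1
  simp only [mem_Jset, Incomp, ltP]
  omega

lemma J23 (hn : 6 ≤ n) (hm : SeqHyp n m) (h23 : 3 ≤ m 2) (h34 : 4 ≤ m 3) (X : PTab n m sh) :
    ((2, 3) ∈ Jset X) ↔ rowOf X 2 < rowOf X 3 := by
  simp only [mem_Jset, Incomp, ltP]
  omega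

lemma J2x (hn : 6 ≤ n) (h23 : 3 ≤ m 2) (X : PTab n m sh) (x : ℕ)
    (hx : 4 ≤ x) (hxn : x ≤ n) (hmx : m x = n) :
    ((2, x) ∈ Jset X) ↔ (x ≤ m 2 ∧ rowOf X 2 < rowOf X x) := by
  simp only [mem_Jset, Incomp, ltP, hmx]
  omega

lemma J3x (hn : 6 ≤ n) (h34 : 4 ≤ m 3) (X : PTab n m sh) (x : ℕ)
    (hx : 4 ≤ x) (hxn : x ≤ n) (hmx : m x = n) :
    ((3, x) ∈ Jset X) ↔ (x ≤ m 3 ∧ rowOf X 3 < rowOf X x) := by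
  simp only [mem_Jset, Incomp, ltP, hmx]
  omega

lemma Jbig (hn : 6 ≤ n) (X : PTab n m sh) (u v : ℕ)
    (hu : 4 ≤ u) (hun : u ≤ n) (hv : 4 ≤ v) (hvn : v ≤ n) (huv : u ≠ v)
    (hmu : m u = n) (hmv : m v = n) :
    ((u, v) ∈ Jset X) ↔ (u < v ∧ rowOf X u < rowOf X v) := by
  simp only [mem_Jset, Incomp, ltP, hmu, hmv]
  omega

end Jmem

set_option maxHeartbeats 1000000 in
lemma key1 (hn : 6 ≤ n) (hm : SeqHyp n m) (h23 : 3 ≤ m 2) (h34 : 4 ≤ m 3)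
    (T : PTab n m (shA n)) :
    Jset (psiT hn hm h23 h34 T) \ Lf' (Wv T) (Ev T) (Fv T)
      = Jset T \ Lf' (Wv T) (Ev T) (Fv T) := by
  obtain ⟨e00, e01, e10, hW, hWn, hE, hEn, hF, hFn, hWE, hWF, hEF⟩ := specsA hn hm h23 h34 T
  clear e00 e01 e10
  have hm1 := hm.1
  have hm23 : m 2 ≤ m 3 := hm.2.2.1 2 3 (by omega) (by omega) (by omega)
  obtain ⟨rT1, rT2, rT3, rTW, rTE, rTF⟩ := rowT_vals hn hm h23 h34 T
  have hpW : rowOf (psiT hn hm h23 h34 T) (Wv T) ≤ 2 := by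
    obtain ⟨rP1, rP2, rP3, rPa, rPb, rPc⟩ := rowPsi_vals hn hm h23 h34 T
    obtain ⟨tmW, -, -⟩ := trip_mem T
    clear * - rPa rPb rPc tmW
    rcases tmW with h | h | h <;> rw [h] <;> omega
  have hpE : rowOf (psiT hn hm h23 h34 T) (Ev T) ≤ 2 := by
    obtain ⟨rP1, rP2, rP3, rPa, rPb, rPc⟩ := rowPsi_vals hn hm h23 h34 T
    obtain ⟨-, tmE, -⟩ := trip_mem T
    clear * - rPa rPb rPc tmE
    rcases tmE with h | h | h <;> rw [h] <;> omega
  have hpF : rowOf (psiT hn hm h23 h34 T) (Fv T) ≤ 2 := by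
    obtain ⟨rP1, rP2, rP3, rPa, rPb, rPc⟩ := rowPsi_vals hn hm h23 h34 T
    obtain ⟨-, -, tmF⟩ := trip_mem T
    clear * - rPa rPb rPc tmF
    rcases tmF with h | h | h <;> rw [h] <;> omega
  have rP2 : rowOf (psiT hn hm h23 h34 T) 2 = 1 := (rowPsi_vals hn hm h23 h34 T).2.1
  have rP3 : rowOf (psiT hn hm h23 h34 T) 3 = 2 := (rowPsi_vals hn hm h23 h34 T).2.2.1
  have H : ∀ u v : ℕ, 1 ≤ u → u ≤ n → 1 ≤ v → v ≤ n → u < v → Incomp m u v →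
      (u, v) ∉ Lf' (Wv T) (Ev T) (Fv T) →
      (rowOf (psiT hn hm h23 h34 T) u < rowOf (psiT hn hm h23 h34 T) v ↔
        rowOf T u < rowOf T v) := by
    intro u v hu1 hun hv1 hvn huv hinc hL
    simp only [Lf', Finset.mem_insert, Finset.mem_singleton, Prod.mk.injEq, not_or] at hL
    obtain ⟨hL1, hL2, hL3, hL4, hL5, hL6, hL7, hL8, hL9, hL10, hL11⟩ := hL
    obtain ⟨hinc1, hinc2, hinc3⟩ := hinc
    unfold ltP at hinc2 hinc3
    by_cases hu1' : u = 1
    · subst hu1'; exfalso; clear * - hm1 hinc2 huv hL1; omega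
    by_cases hu2 : u = 2
    · subst hu2
      have hvW : v ≠ Wv T := by clear * - hinc2 hm23 hW; omega
      have hvE : v ≠ Ev T := by clear * - hinc2 hE; omega
      obtain ⟨h3r, heq⟩ := row_off hn hm h23 h34 T v hv1 hvn (by omega) (by omega)
        (by clear * - hL2 huv; omega) hvW hvE (by clear * - hL3; omega)
      rw [heq]; clear * - rP2 rT2 h3r; omega
    by_cases hu3 : u = 3
    · subst hu3
      have hvW : v ≠ Wv T := by clear * - hinc2 hW; omega
      obtain ⟨h3r, heq⟩ := row_off hn hm h23 h34 T v hv1 hvn (by omega) (by omega)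
        (by omega) hvW (by clear * - hL4; omega) (by clear * - hL5; omega)
      rw [heq]; clear * - rP3 rT3 h3r; omega
    by_cases huW : u = Wv T
    · subst huW
      have hvE : v ≠ Ev T := by clear * - hL6; omega
      have hvF : v ≠ Fv T := by clear * - hL8; omega
      obtain ⟨h3r, heq⟩ := row_off hn hm h23 h34 T v hv1 hvn (by clear * - hW h34 huv; omega)
        (by clear * - hW h34 huv; omega) (by clear * - hW h34 huv; omega) (by omega) hvE hvF
      rw [heq]; clear * - hpW rTW h3r; omega
    by_cases huE : u = Ev T
    · subst huE
      have hvW : v ≠ Wv T := by clear * - hL7; omega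
      have hvF : v ≠ Fv T := by clear * - hL10; omega
      obtain ⟨h3r, heq⟩ := row_off hn hm h23 h34 T v hv1 hvn (by clear * - hE h23 huv; omega)
        (by clear * - hE h23 huv; omega) (by clear * - hE h23 huv; omega) hvW (by omega) hvF
      rw [heq]; clear * - hpE rTE h3r; omega
    by_cases huF : u = Fv T
    · subst huF
      have hvW : v ≠ Wv T := by clear * - hL9; omega
      have hvE : v ≠ Ev T := by clear * - hL11; omega
      obtain ⟨h3r, heq⟩ := row_off hn hm h23 h34 T v hv1 hvn (by clear * - hF huv; omega)
        (by clear * - hF huv; omega) (by clear * - hF huv; omega) hvW hvE (by omega)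
      rw [heq]; clear * - hpF rTF h3r; omega
    · obtain ⟨h3u, hequ⟩ := row_off hn hm h23 h34 T u hu1 hun hu1' hu2 hu3 huW huE huF
      rw [hequ]
      by_cases hvW : v = Wv T
      · subst hvW; clear * - hpW rTW h3u; omega
      by_cases hvE : v = Ev T
      · subst hvE; clear * - hpE rTE h3u; omega
      by_cases hvF : v = Fv T
      · subst hvF; clear * - hpF rTF h3u; omega
      · obtain ⟨h3v, heqv⟩ := row_off hn hm h23 h34 T v hv1 hvn
          (by clear * - hu1 hu1' hu2 hu3 huv; omega) (by clear * - hu1 hu1' hu2 hu3 huv; omega)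
          (by clear * - hu1 hu1' hu2 hu3 huv; omega) hvW hvE hvF
        rw [heqv]
  ext ⟨u, v⟩
  simp only [Finset.mem_sdiff, mem_Jset]
  constructor
  · rintro ⟨⟨hu, hv, huv, hinc, hrow⟩, hL⟩
    exact ⟨⟨hu, hv, huv, hinc,
      (H u v hu.1 hu.2 hv.1 hv.2 huv hinc hL).mp hrow⟩, hL⟩
  · rintro ⟨⟨hu, hv, huv, hinc, hrow⟩, hL⟩
    exact ⟨⟨hu, hv, huv, hinc,
      (H u v hu.1 hu.2 hv.1 hv.2 huv hinc hL).mpr hrow⟩, hL⟩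


lemma card_filter_Lf (W E F : ℕ) (hW : 4 ≤ W) (hE : 4 ≤ E) (hF : 4 ≤ F)
    (hWE : W ≠ E) (hWF : W ≠ F) (hEF : E ≠ F) (q : ℕ × ℕ → Prop) [DecidablePred q] :
    ((Lf' W E F).filter q).card =
      (if q (1,2) then 1 else 0) + (if q (2,3) then 1 else 0) + (if q (2,F) then 1 else 0) +
      (if q (3,E) then 1 else 0) + (if q (3,F) then 1 else 0) + (if q (W,E) then 1 else 0) +
      (if q (E,W) then 1 else 0) + (if q (W,F) then 1 else 0) + (if q (F,W) then 1 else 0) +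
      (if q (E,F) then 1 else 0) + (if q (F,E) then 1 else 0) := by
  rw [Finset.card_filter]
  show ∑ a ∈ (insert ((1:ℕ),(2:ℕ)) (insert (2,3) (insert (2,F) (insert (3,E) (insert (3,F)
    (insert (W,E) (insert (E,W) (insert (W,F) (insert (F,W) (insert (E,F)
      ({(F,E)} : Finset (ℕ × ℕ)))))))))))), _ = _
  rw [Finset.sum_insert (by
    simp only [Finset.mem_insert, Finset.mem_singleton, Prod.mk.injEq]; omega)]
  rw [Finset.sum_insert (by
    simp only [Finset.mem_insert, Finset.mem_singleton, Prod.mk.injEq]; omega)]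
  rw [Finset.sum_insert (by
    simp only [Finset.mem_insert, Finset.mem_singleton, Prod.mk.injEq]; omega)]
  rw [Finset.sum_insert (by
    simp only [Finset.mem_insert, Finset.mem_singleton, Prod.mk.injEq]; omega)]
  rw [Finset.sum_insert (by
    simp only [Finset.mem_insert, Finset.mem_singleton, Prod.mk.injEq]; omega)]
  rw [Finset.sum_insert (by
    simp only [Finset.mem_insert, Finset.mem_singleton, Prod.mk.injEq]; omega)]
  rw [Finset.sum_insert (by
    simp only [Finset.mem_insert, Finset.mem_singleton, Prod.mk.injEq]; omega)]
  rw [Finset.sum_insert (by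
    simp only [Finset.mem_insert, Finset.mem_singleton, Prod.mk.injEq]; omega)]
  rw [Finset.sum_insert (by
    simp only [Finset.mem_insert, Finset.mem_singleton, Prod.mk.injEq]; omega)]
  rw [Finset.sum_insert (by
    simp only [Finset.mem_singleton, Prod.mk.injEq]; omega)]
  rw [Finset.sum_singleton]
  ring

set_option maxHeartbeats 1000000 in
lemma key2 (hn : 6 ≤ n) (hm : SeqHyp n m) (h23 : 3 ≤ m 2) (h34 : 4 ≤ m 3)
    (T : PTab n m (shA n)) :
    (Jset (psiT hn hm h23 h34 T) ∩ Lf' (Wv T) (Ev T) (Fv T)).card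
      = (Jset T ∩ Lf' (Wv T) (Ev T) (Fv T)).card + 1 := by
  classical
  obtain ⟨e00, e01, e10, hW, hWn, hE, hEn, hF, hFn, hWE, hWF, hEF⟩ := specsA hn hm h23 h34 T
  clear e00 e01 e10
  have hm1 := hm.1
  have hm23 : m 2 ≤ m 3 := hm.2.2.1 2 3 (by omega) (by omega) (by omega)
  have hW4 : 4 ≤ Wv T := by omega
  have hE4 : 4 ≤ Ev T := by omega
  have hmW : m (Wv T) = n := hm.2.2.2 _ hW4 hWn
  have hmE : m (Ev T) = n := hm.2.2.2 _ hE4 hEn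
  have hmF : m (Fv T) = n := hm.2.2.2 _ hF hFn
  obtain ⟨rT1, rT2, rT3, rTW, rTE, rTF⟩ := rowT_vals hn hm h23 h34 T
  obtain ⟨rP1, rP2, rP3, rPa, rPb, rPc⟩ := rowPsi_vals hn hm h23 h34 T
  have conv : ∀ {sh' : List ℕ} (X : PTab n m sh'),
      Jset X ∩ Lf' (Wv T) (Ev T) (Fv T)
        = (Lf' (Wv T) (Ev T) (Fv T)).filter (· ∈ Jset X) := by
    intro sh' X; rw [Finset.filter_mem_eq_inter, Finset.inter_comm]
  rw [conv, conv, card_filter_Lf _ _ _ hW4 hE4 hF hWE hWF hEF,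
    card_filter_Lf _ _ _ hW4 hE4 hF hWE hWF hEF]
  simp only [J12 hn hm h23 (psiT hn hm h23 h34 T), J12 hn hm h23 T,
    J23 hn hm h23 h34 (psiT hn hm h23 h34 T), J23 hn hm h23 h34 T,
    J2x hn h23 (psiT hn hm h23 h34 T) (Fv T) hF hFn hmF, J2x hn h23 T (Fv T) hF hFn hmF,
    J3x hn h34 (psiT hn hm h23 h34 T) (Ev T) hE4 hEn hmE, J3x hn h34 T (Ev T) hE4 hEn hmE,
    J3x hn h34 (psiT hn hm h23 h34 T) (Fv T) hF hFn hmF, J3x hn h34 T (Fv T) hF hFn hmF,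
    Jbig hn (psiT hn hm h23 h34 T) (Wv T) (Ev T) hW4 hWn hE4 hEn hWE hmW hmE,
    Jbig hn T (Wv T) (Ev T) hW4 hWn hE4 hEn hWE hmW hmE,
    Jbig hn (psiT hn hm h23 h34 T) (Ev T) (Wv T) hE4 hEn hW4 hWn (Ne.symm hWE) hmE hmW,
    Jbig hn T (Ev T) (Wv T) hE4 hEn hW4 hWn (Ne.symm hWE) hmE hmW,
    Jbig hn (psiT hn hm h23 h34 T) (Wv T) (Fv T) hW4 hWn hF hFn hWF hmW hmF,
    Jbig hn T (Wv T) (Fv T) hW4 hWn hF hFn hWF hmW hmF,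
    Jbig hn (psiT hn hm h23 h34 T) (Fv T) (Wv T) hF hFn hW4 hWn (Ne.symm hWF) hmF hmW,
    Jbig hn T (Fv T) (Wv T) hF hFn hW4 hWn (Ne.symm hWF) hmF hmW,
    Jbig hn (psiT hn hm h23 h34 T) (Ev T) (Fv T) hE4 hEn hF hFn hEF hmE hmF,
    Jbig hn T (Ev T) (Fv T) hE4 hEn hF hFn hEF hmE hmF,
    Jbig hn (psiT hn hm h23 h34 T) (Fv T) (Ev T) hF hFn hE4 hEn (Ne.symm hEF) hmF hmE,
    Jbig hn T (Fv T) (Ev T) hF hFn hE4 hEn (Ne.symm hEF) hmF hmE]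
  rcases trip_spec T with ⟨c1, c2, ht⟩ | ⟨c1, c2, ht⟩ | ⟨c1, c2, c3, ht⟩ |
    ⟨c1, c2, c3, ht⟩ | ⟨c1, c2, c3, ht⟩ | ⟨c1, c2, c3, ht⟩ <;>
  [ (have d1 : (trip m T).1 = Wv T := by rw [ht]
     have d2 : (trip m T).2.1 = Ev T := by rw [ht]
     have d3 : (trip m T).2.2 = Fv T := by rw [ht]);
    (have d1 : (trip m T).1 = Ev T := by rw [ht]
     have d2 : (trip m T).2.1 = Wv T := by rw [ht]
     have d3 : (trip m T).2.2 = Fv T := by rw [ht]);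
    (have d1 : (trip m T).1 = Wv T := by rw [ht]
     have d2 : (trip m T).2.1 = Fv T := by rw [ht]
     have d3 : (trip m T).2.2 = Ev T := by rw [ht]);
    (have d1 : (trip m T).1 = Fv T := by rw [ht]
     have d2 : (trip m T).2.1 = Wv T := by rw [ht]
     have d3 : (trip m T).2.2 = Ev T := by rw [ht]);
    (have d1 : (trip m T).1 = Ev T := by rw [ht]
     have d2 : (trip m T).2.1 = Fv T := by rw [ht]
     have d3 : (trip m T).2.2 = Wv T := by rw [ht]);
    (have d1 : (trip m T).1 = Fv T := by rw [ht]
     have d2 : (trip m T).2.1 = Ev T := by rw [ht]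
     have d3 : (trip m T).2.2 = Wv T := by rw [ht])] <;>
  rw [d1] at rPa <;> rw [d2] at rPb <;> rw [d3] at rPc <;>
  simp only [rT1, rT2, rT3, rTW, rTE, rTF, rP1, rP2, rP3, rPa, rPb, rPc] <;>
  norm_num <;>
  clear rT1 rT2 rT3 rTW rTE rTF rP1 rP2 rP3 rPa rPb rPc ht <;>
  split_ifs <;> omega


def Wrec (m : ℕ → ℕ) (x0 x1 x2 : ℕ) : ℕ :=
  if x0 ≤ m 3 then (if x1 ≤ m 3 then x2 else x1) else x0
def Erec (m : ℕ → ℕ) (x0 x1 x2 : ℕ) : ℕ :=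
  if x0 ≤ m 2 then (if x1 ≤ m 3 then x1 else x2)
  else if x0 ≤ m 3 then x0 else (if x1 ≤ m 3 then x2 else x1)
def Frec (m : ℕ → ℕ) (x0 x1 x2 : ℕ) : ℕ :=
  if x0 ≤ m 2 then x0 else if x1 ≤ m 3 then x1 else x2

lemma rec_spec (hn : 6 ≤ n) (hm : SeqHyp n m) (h23 : 3 ≤ m 2) (h34 : 4 ≤ m 3)
    (T : PTab n m (shA n)) :
    Wrec m (trip m T).1 (trip m T).2.1 (trip m T).2.2 = Wv T ∧
    Erec m (trip m T).1 (trip m T).2.1 (trip m T).2.2 = Ev T ∧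
    Frec m (trip m T).1 (trip m T).2.1 (trip m T).2.2 = Fv T := by
  obtain ⟨-, -, -, hW, hWn, hE, hEn, hF, hFn, hWE, hWF, hEF⟩ := specsA hn hm h23 h34 T
  have hm23 : m 2 ≤ m 3 := hm.2.2.1 2 3 (by omega) (by omega) (by omega)
  rcases trip_spec T with ⟨c1, c2, ht⟩ | ⟨c1, c2, ht⟩ | ⟨c1, c2, c3, ht⟩ |
    ⟨c1, c2, c3, ht⟩ | ⟨c1, c2, c3, ht⟩ | ⟨c1, c2, c3, ht⟩ <;>
  rw [ht] <;> dsimp only <;> unfold Wrec Erec Frec <;>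
  refine ⟨?_, ?_, ?_⟩ <;> split_ifs <;> omega



end PJaux

/-- For the natural unit interval order `P(m)` on `{1,…,n}` induced by `(2, m₂, m₃, n, …, n)`,
with `2` incomparable to `3` and `3` incomparable to `4`, there is an injection `ψ` from the
`P(m)`-tableaux of shape `(3,2,1^{n-5})` to those of shape `(2,2,2,1^{n-6})` with
`inv_G (ψ T) = inv_G T + 1` for all `T`. -/


theorem ptab_injection_32_to_222 (n : ℕ) (m : ℕ → ℕ) (hn : 6 ≤ n) (hm : SeqHyp n m)
    (h23 : 3 ≤ m 2) (h34 : 4 ≤ m 3) :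
    ∃ ψ : PTab n m (3 :: 2 :: List.replicate (n - 5) 1) →
          PTab n m (2 :: 2 :: 2 :: List.replicate (n - 6) 1),
      Function.Injective ψ ∧ ∀ T, invG (ψ T) = invG T + 1 := by
  refine ⟨fun T => PJaux.psiT hn hm h23 h34 T, ?_, ?_⟩
  · intro T T' h
    simp only at h
    have hE : ∀ i j, PJaux.psiEntry n m T i j = PJaux.psiEntry n m T' i j := by
      intro i j
      have h2 := congrArg PTab.entry h
      rw [PJaux.psiT_entry, PJaux.psiT_entry] at h2
      exact congrFun (congrFun h2 i) j
    have hx1 : (PJaux.trip m T).1 = (PJaux.trip m T').1 := by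
      have h01 := hE 0 1; rwa [PJaux.psiE01, PJaux.psiE01] at h01
    have hx2 : (PJaux.trip m T).2.1 = (PJaux.trip m T').2.1 := by
      have h11 := hE 1 1; rwa [PJaux.psiE11, PJaux.psiE11] at h11
    have hx3 : (PJaux.trip m T).2.2 = (PJaux.trip m T').2.2 := by
      have h21 := hE 2 1; rwa [PJaux.psiE21, PJaux.psiE21] at h21
    have hrec := PJaux.rec_spec hn hm h23 h34 T
    have hrec' := PJaux.rec_spec hn hm h23 h34 T'
    have hWeq : PJaux.Wv T = PJaux.Wv T' := by
      rw [← hrec.1, ← hrec'.1, hx1, hx2, hx3]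
    have hEeq : PJaux.Ev T = PJaux.Ev T' := by
      rw [← hrec.2.1, ← hrec'.2.1, hx1, hx2, hx3]
    have hFeq : PJaux.Fv T = PJaux.Fv T' := by
      rw [← hrec.2.2, ← hrec'.2.2, hx1, hx2, hx3]
    obtain ⟨e00, e01, e10, -⟩ := PJaux.specsA hn hm h23 h34 T
    obtain ⟨e00', e01', e10', -⟩ := PJaux.specsA hn hm h23 h34 T'
    apply PJaux.PTab_ext
    funext i j
    by_cases hin : j < (PJaux.shA n).getD i 0
    · rw [PJaux.shA_getD n hn] at hin
      split_ifs at hin with c0 c1 c2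
      · subst c0
        interval_cases j
        · rw [e00, e00']
        · rw [e01, e01']
        · rw [← PJaux.Wv_def T, ← PJaux.Wv_def T']; exact hWeq
      · subst c1
        interval_cases j
        · rw [e10, e10']
        · rw [← PJaux.Ev_def T, ← PJaux.Ev_def T']; exact hEeq
      · have hj0 : j = 0 := by omega
        subst hj0
        by_cases hi2 : i = 2
        · subst hi2
          rw [← PJaux.Fv_def T, ← PJaux.Fv_def T']; exact hFeq
        · have h3 : 3 ≤ i := by omega
          have h4 := hE i 0
          rwa [PJaux.psi_big T h3 (by omega), PJaux.psi_big T' h3 (by omega)] at h4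
      · exact absurd hin (by omega)
    · push_neg at hin
      rw [T.zero_outside i j hin, T'.zero_outside i j hin]
  · intro T
    show invG (PJaux.psiT hn hm h23 h34 T) = invG T + 1
    rw [PJaux.invG_eq_Jcard, PJaux.invG_eq_Jcard]
    have h1 := Finset.card_inter_add_card_sdiff (PJaux.Jset (PJaux.psiT hn hm h23 h34 T))
      (PJaux.Lf' (PJaux.Wv T) (PJaux.Ev T) (PJaux.Fv T))
    have h2 := Finset.card_inter_add_card_sdiff (PJaux.Jset T)
      (PJaux.Lf' (PJaux.Wv T) (PJaux.Ev T) (PJaux.Fv T))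
    have k1 := PJaux.key1 hn hm h23 h34 T
    have k2 := PJaux.key2 hn hm h23 h34 T
    rw [k1] at h1
    omega
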